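/- Let b > 0 and let Ψ : ℝ × ℝ → ℝ be continuous on [−b,b] × [−1,1] with continuous partial derivative ∂ₓΨ on [−b,b] × [−1,1], satisfying Ψ(b,μ) = 0 for all μ ∈ [−1,0] and Ψ(−b,μ) = 0 for all μ ∈ [0,1]. Let Σ_t : ℝ → ℝ be continuous on [−b,b] and let 0 < σ_* ≤ σ* satisfy σ_* ≤ Σ_t(x) ≤ σ* for all x ∈ [−b,b]. Then (∫_{−1}^{1} ∫_{−b}^{b} (Ψ(x,μ)² + (μ ∂ₓΨ(x,μ))²) dx dμ)^{1/2} ≤ C_gr (∫_{−1}^{1} ∫_{−b}^{b} (μ ∂ₓΨ(x,μ) + Σ_t(x)Ψ(x,μ))² dx dμ)^{1/2}, where C_gr = (σ_*⁻² + (1 + σ*/σ_*)²)^{1/2}. -/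

import Mathlib

open Set

private lemma young_aux (σstar d ψ : ℝ) :
    2 * σstar * (d * ψ) ≤ d ^ 2 + σstar ^ 2 * ψ ^ 2 := by
  nlinarith [sq_nonneg (d - σstar * ψ)]

private lemma ptwise_main (σstar σsup σ d ψ : ℝ) (h1 : 0 < σstar) (h3 : σstar ≤ σ)
    (h4 : σ ≤ σsup) :
    ψ ^ 2 + (d - σ * ψ) ^ 2
      ≤ (1 + σsup / σstar) * d ^ 2 + (1 + σsup * σstar + σsup ^ 2) * ψ ^ 2 := by
  have key : σstar * (ψ ^ 2 + (d - σ * ψ) ^ 2)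
      ≤ σstar * ((1 + σsup / σstar) * d ^ 2 + (1 + σsup * σstar + σsup ^ 2) * ψ ^ 2) := by
    have e : σstar * ((1 + σsup / σstar) * d ^ 2 + (1 + σsup * σstar + σsup ^ 2) * ψ ^ 2)
        = (σstar + σsup) * d ^ 2 + (σstar + σsup * σstar ^ 2 + σstar * σsup ^ 2) * ψ ^ 2 := by
      field_simp
    rw [e]
    nlinarith [mul_nonneg (h1.le.trans h3) (sq_nonneg (d + σstar * ψ)),
      mul_nonneg (sub_nonneg.2 h4) (sq_nonneg d),
      mul_nonneg (sub_nonneg.2 h4) (sq_nonneg (σstar * ψ)),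
      mul_nonneg (mul_nonneg (mul_nonneg h1.le (sub_nonneg.2 h4))
        (by linarith : (0:ℝ) ≤ σsup + σ)) (sq_nonneg ψ)]
  exact (mul_le_mul_iff_right₀ h1).mp key

private lemma key_1d (a c : ℝ) (hac : a ≤ c) (f f' σ : ℝ → ℝ) (μ σstar σsup : ℝ)
    (hf : ContinuousOn f (Icc a c)) (hf' : ContinuousOn f' (Icc a c))
    (hσ : ContinuousOn σ (Icc a c))
    (hd : ∀ x ∈ Icc a c, HasDerivWithinAt f (f' x) (Icc a c) x)
    (h1 : 0 < σstar) (h2 : σstar ≤ σsup)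
    (hbd : ∀ x ∈ Icc a c, σstar ≤ σ x ∧ σ x ≤ σsup)
    (hboundary : 0 ≤ μ * (f c ^ 2 / 2 - f a ^ 2 / 2)) :
    ∫ x in a..c, (f x ^ 2 + (μ * f' x) ^ 2)
      ≤ (σstar⁻¹ ^ 2 + (1 + σsup / σstar) ^ 2)
        * ∫ x in a..c, (μ * f' x + σ x * f x) ^ 2 := by
  have huI : uIcc a c = Icc a c := uIcc_of_le hac
  have II : ∀ {g : ℝ → ℝ}, ContinuousOn g (Icc a c) →
      IntervalIntegrable g MeasureTheory.volume a c := fun hg =>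
    ContinuousOn.intervalIntegrable (by rwa [huI])
  have cd : ContinuousOn (fun x => μ * f' x + σ x * f x) (Icc a c) :=
    (continuousOn_const.mul hf').add (hσ.mul hf)
  -- FTC
  have hftc : ∫ x in a..c, f' x * f x = f c ^ 2 / 2 - f a ^ 2 / 2 := by
    have hfun : (fun x => f x ^ 2 / 2) = fun x => f x * f x / 2 := by funext t; ring
    have := intervalIntegral.integral_eq_sub_of_hasDeriv_right_of_le hac
      (f := fun x => f x ^ 2 / 2) (f' := fun x => f' x * f x)
      ((hf.pow 2).div_const 2)
      (fun x hx => by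
        have hdx := (hd x (Ioo_subset_Icc_self hx)).hasDerivAt (Icc_mem_nhds hx.1 hx.2)
        have h3 : HasDerivAt (fun t => f t * f t / 2) ((f' x * f x + f x * f' x) / 2) x :=
          (hdx.mul hdx).div_const 2
        have h4 : HasDerivAt (fun t => f t ^ 2 / 2) (f' x * f x) x := by
          rw [hfun]; convert h3 using 1; ring
        exact h4.hasDerivWithinAt)
      (II (hf'.mul hf))
    simpa using this
  set JΨ := ∫ x in a..c, f x ^ 2 with hJΨ
  set JD := ∫ x in a..c, (μ * f' x + σ x * f x) ^ 2 with hJD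
  set Jc := ∫ x in a..c, (μ * f' x + σ x * f x) * f x with hJc
  -- energy estimate (a)
  have hA : σstar * JΨ ≤ Jc := by
    have e1 : Jc = (∫ x in a..c, μ * (f' x * f x)) + ∫ x in a..c, σ x * f x ^ 2 := by
      rw [hJc, ← intervalIntegral.integral_add (II (g := fun x => μ * (f' x * f x)) (continuousOn_const.mul (hf'.mul hf)))
        (II (g := fun x => σ x * f x ^ 2) (hσ.mul (hf.pow 2)))]
      exact intervalIntegral.integral_congr (fun x _ => by ring)
    have e2 : (∫ x in a..c, μ * (f' x * f x)) = μ * (f c ^ 2 / 2 - f a ^ 2 / 2) := by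
      rw [intervalIntegral.integral_const_mul, hftc]
    have e3 : σstar * JΨ ≤ ∫ x in a..c, σ x * f x ^ 2 := by
      rw [hJΨ, ← intervalIntegral.integral_const_mul]
      exact intervalIntegral.integral_mono_on hac (II (continuousOn_const.mul (hf.pow 2)))
        (II (hσ.mul (hf.pow 2)))
        (fun x hx => mul_le_mul_of_nonneg_right (hbd x hx).1 (sq_nonneg _))
    rw [e1, e2]; linarith
  -- Young (b)
  have hB : 2 * σstar * Jc ≤ JD + σstar ^ 2 * JΨ := by
    have hm := intervalIntegral.integral_mono_on hac
      (II (g := fun x => 2 * σstar * ((μ * f' x + σ x * f x) * f x)) ((continuousOn_const.mul (cd.mul hf))))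
      (II (g := fun x => (μ * f' x + σ x * f x) ^ 2 + σstar ^ 2 * f x ^ 2) ((cd.pow 2).add (continuousOn_const.mul (hf.pow 2))))
      (fun x _ => young_aux σstar (μ * f' x + σ x * f x) (f x))
    rwa [intervalIntegral.integral_const_mul, intervalIntegral.integral_add
      (II (g := fun x => (μ * f' x + σ x * f x) ^ 2) (cd.pow 2)) (II (g := fun x => σstar ^ 2 * f x ^ 2) (continuousOn_const.mul (hf.pow 2))),
      intervalIntegral.integral_const_mul] at hm
  -- (c)
  have hC : JΨ ≤ JD / σstar ^ 2 := by
    have h2σ : (0:ℝ) ≤ 2 * σstar := by positivity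
    have := mul_le_mul_of_nonneg_left hA h2σ
    rw [le_div_iff₀ (by positivity)]
    nlinarith
  -- (d)
  have hD : (∫ x in a..c, (f x ^ 2 + (μ * f' x) ^ 2))
      ≤ (1 + σsup / σstar) * JD + (1 + σsup * σstar + σsup ^ 2) * JΨ := by
    have hm := intervalIntegral.integral_mono_on hac
      (II (g := fun x => f x ^ 2 + (μ * f' x) ^ 2) ((hf.pow 2).add ((continuousOn_const.mul hf').pow 2)))
      (II (g := fun x => (1 + σsup / σstar) * (μ * f' x + σ x * f x) ^ 2 + (1 + σsup * σstar + σsup ^ 2) * f x ^ 2) ((continuousOn_const.mul (cd.pow 2)).add (continuousOn_const.mul (hf.pow 2))))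
      (fun x hx => by
        calc f x ^ 2 + (μ * f' x) ^ 2
            = f x ^ 2 + ((μ * f' x + σ x * f x) - σ x * f x) ^ 2 := by ring
          _ ≤ (1 + σsup / σstar) * (μ * f' x + σ x * f x) ^ 2
              + (1 + σsup * σstar + σsup ^ 2) * f x ^ 2 :=
            ptwise_main σstar σsup (σ x) (μ * f' x + σ x * f x) (f x) h1 (hbd x hx).1
              (hbd x hx).2)
    rwa [intervalIntegral.integral_add (II (g := fun x => (1 + σsup / σstar) * (μ * f' x + σ x * f x) ^ 2) (continuousOn_const.mul (cd.pow 2)))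
      (II (g := fun x => (1 + σsup * σstar + σsup ^ 2) * f x ^ 2) (continuousOn_const.mul (hf.pow 2))),
      intervalIntegral.integral_const_mul, intervalIntegral.integral_const_mul] at hm
  have hK : (0:ℝ) ≤ 1 + σsup * σstar + σsup ^ 2 := by nlinarith [mul_pos (h1.trans_le h2) h1, sq_nonneg σsup]
  calc (∫ x in a..c, (f x ^ 2 + (μ * f' x) ^ 2))
      ≤ (1 + σsup / σstar) * JD + (1 + σsup * σstar + σsup ^ 2) * JΨ := hD
    _ ≤ (1 + σsup / σstar) * JD + (1 + σsup * σstar + σsup ^ 2) * (JD / σstar ^ 2) := by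
        have := mul_le_mul_of_nonneg_left hC hK
        linarith
    _ = (σstar⁻¹ ^ 2 + (1 + σsup / σstar) ^ 2) * JD := by
        field_simp; ring


/-- Graph-norm control by the transport residual in 1D slab geometry with
vacuum boundary condition: `‖Ψ‖_gr ≤ C_gr ‖𝒟Ψ‖₀` with
`C_gr = (σ_*⁻² + (1 + σ*/σ_*)²)^{1/2}`. -/
theorem transport_graph_norm_control
    (b : ℝ) (hb : 0 < b) (Ψ Ψx : ℝ → ℝ → ℝ) (sigmaT : ℝ → ℝ) (σstar σsup : ℝ)
    (hΨ : ContinuousOn (fun p : ℝ × ℝ => Ψ p.1 p.2) (Icc (-b) b ×ˢ Icc (-1) 1))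
    (hΨx : ContinuousOn (fun p : ℝ × ℝ => Ψx p.1 p.2) (Icc (-b) b ×ˢ Icc (-1) 1))
    (hderiv : ∀ μ ∈ Icc (-1 : ℝ) 1, ∀ x ∈ Icc (-b) b,
      HasDerivWithinAt (fun t => Ψ t μ) (Ψx x μ) (Icc (-b) b) x)
    (hsigmaT : ContinuousOn sigmaT (Icc (-b) b))
    (hσstar : 0 < σstar) (hσ : σstar ≤ σsup)
    (hbound : ∀ x ∈ Icc (-b) b, σstar ≤ sigmaT x ∧ sigmaT x ≤ σsup)
    (hin₁ : ∀ μ ∈ Icc (-1 : ℝ) 0, Ψ b μ = 0)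
    (hin₂ : ∀ μ ∈ Icc (0 : ℝ) 1, Ψ (-b) μ = 0) :
    Real.sqrt (∫ μ in (-1 : ℝ)..1, ∫ x in (-b)..b,
        ((Ψ x μ) ^ 2 + (μ * Ψx x μ) ^ 2))
      ≤ Real.sqrt (σstar⁻¹ ^ 2 + (1 + σsup / σstar) ^ 2)
        * Real.sqrt (∫ μ in (-1 : ℝ)..1, ∫ x in (-b)..b,
            (μ * Ψx x μ + sigmaT x * Ψ x μ) ^ 2) := by
  have hbb : -b ≤ b := by linarith
  have h11 : (-1:ℝ) ≤ 1 := by norm_num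
  set px : ℝ → ℝ := fun x => max (-b) (min b x) with hpxdef
  set pm : ℝ → ℝ := fun m => max (-1) (min 1 m) with hpmdef
  have cpx : Continuous px := continuous_const.max (continuous_const.min continuous_id)
  have cpm : Continuous pm := continuous_const.max (continuous_const.min continuous_id)
  have hpx_mem : ∀ x, px x ∈ Icc (-b) b :=
    fun x => ⟨le_max_left _ _, max_le hbb (min_le_left _ _)⟩
  have hpm_mem : ∀ m, pm m ∈ Icc (-1:ℝ) 1 :=
    fun m => ⟨le_max_left _ _, max_le h11 (min_le_left _ _)⟩
  have hpx_eq : ∀ x ∈ Icc (-b) b, px x = x := fun x hx => by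
    simp only [hpxdef]; rw [min_eq_right hx.2, max_eq_right hx.1]
  have hpm_eq : ∀ m ∈ Icc (-1:ℝ) 1, pm m = m := fun m hm => by
    simp only [hpmdef]; rw [min_eq_right hm.2, max_eq_right hm.1]
  set Ψe : ℝ → ℝ → ℝ := fun x m => Ψ (px x) (pm m) with hΨedef
  set Ψxe : ℝ → ℝ → ℝ := fun x m => Ψx (px x) (pm m) with hΨxedef
  set σe : ℝ → ℝ := fun x => sigmaT (px x) with hσedef
  have cΨe : Continuous (fun p : ℝ × ℝ => Ψe p.1 p.2) :=
    hΨ.comp_continuous ((cpx.comp continuous_fst).prodMk (cpm.comp continuous_snd))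
      (fun p => ⟨hpx_mem _, hpm_mem _⟩)
  have cΨxe : Continuous (fun p : ℝ × ℝ => Ψxe p.1 p.2) :=
    hΨx.comp_continuous ((cpx.comp continuous_fst).prodMk (cpm.comp continuous_snd))
      (fun p => ⟨hpx_mem _, hpm_mem _⟩)
  have cσe : Continuous σe := hsigmaT.comp_continuous cpx hpx_mem
  set G : ℝ → ℝ → ℝ := fun m x => Ψe x m ^ 2 + (m * Ψxe x m) ^ 2 with hGdef
  set Fd : ℝ → ℝ → ℝ := fun m x => (m * Ψxe x m + σe x * Ψe x m) ^ 2 with hFddef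
  have cswapΨ : Continuous fun p : ℝ × ℝ => Ψe p.2 p.1 := cΨe.comp continuous_swap
  have cswapΨx : Continuous fun p : ℝ × ℝ => Ψxe p.2 p.1 := cΨxe.comp continuous_swap
  have cG : Continuous (Function.uncurry G) :=
    (cswapΨ.pow 2).add ((continuous_fst.mul cswapΨx).pow 2)
  have cFd : Continuous (Function.uncurry Fd) :=
    ((continuous_fst.mul cswapΨx).add ((cσe.comp continuous_snd).mul cswapΨ)).pow 2
  have cIG : Continuous fun m => ∫ x in (-b)..b, G m x :=
    intervalIntegral.continuous_parametric_intervalIntegral_of_continuous' cG _ _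
  have cIFd : Continuous fun m => ∫ x in (-b)..b, Fd m x :=
    intervalIntegral.continuous_parametric_intervalIntegral_of_continuous' cFd _ _
  have hGcongr : ∀ m ∈ Icc (-1:ℝ) 1,
      (∫ x in (-b)..b, (Ψ x m ^ 2 + (m * Ψx x m) ^ 2)) = ∫ x in (-b)..b, G m x := by
    intro m hm
    apply intervalIntegral.integral_congr
    intro x hx
    rw [uIcc_of_le hbb] at hx
    simp only [hGdef, hΨedef, hΨxedef]
    rw [hpx_eq x hx, hpm_eq m hm]
  have hFdcongr : ∀ m ∈ Icc (-1:ℝ) 1,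
      (∫ x in (-b)..b, (m * Ψx x m + sigmaT x * Ψ x m) ^ 2) = ∫ x in (-b)..b, Fd m x := by
    intro m hm
    apply intervalIntegral.integral_congr
    intro x hx
    rw [uIcc_of_le hbb] at hx
    simp only [hFddef, hΨedef, hΨxedef, hσedef]
    rw [hpx_eq x hx, hpm_eq m hm]
  set C2 : ℝ := σstar⁻¹ ^ 2 + (1 + σsup / σstar) ^ 2 with hC2def
  have houter : (∫ μ in (-1:ℝ)..1, ∫ x in (-b)..b, ((Ψ x μ) ^ 2 + (μ * Ψx x μ) ^ 2))
      ≤ C2 * ∫ μ in (-1:ℝ)..1, ∫ x in (-b)..b, (μ * Ψx x μ + sigmaT x * Ψ x μ) ^ 2 := by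
    have e1 : (∫ μ in (-1:ℝ)..1, ∫ x in (-b)..b, ((Ψ x μ) ^ 2 + (μ * Ψx x μ) ^ 2))
        = ∫ m in (-1:ℝ)..1, ∫ x in (-b)..b, G m x := by
      apply intervalIntegral.integral_congr
      intro m hm
      rw [uIcc_of_le h11] at hm
      exact hGcongr m hm
    have e2 : (∫ μ in (-1:ℝ)..1, ∫ x in (-b)..b, (μ * Ψx x μ + sigmaT x * Ψ x μ) ^ 2)
        = ∫ m in (-1:ℝ)..1, ∫ x in (-b)..b, Fd m x := by
      apply intervalIntegral.integral_congr
      intro m hm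
      rw [uIcc_of_le h11] at hm
      exact hFdcongr m hm
    rw [e1, e2, ← intervalIntegral.integral_const_mul]
    apply intervalIntegral.integral_mono_on (g := fun m => C2 * ∫ x in (-b)..b, Fd m x) h11
      (cIG.intervalIntegrable _ _) ((continuous_const.mul cIFd).intervalIntegrable _ _)
    intro m hm
    rw [← hGcongr m hm, ← hFdcongr m hm]
    have cf : ContinuousOn (fun x => Ψ x m) (Icc (-b) b) :=
      hΨ.comp ((continuous_id.prodMk continuous_const).continuousOn)
        (fun x hx => ⟨hx, hm⟩)
    have cfx : ContinuousOn (fun x => Ψx x m) (Icc (-b) b) :=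
      hΨx.comp ((continuous_id.prodMk continuous_const).continuousOn)
        (fun x hx => ⟨hx, hm⟩)
    have hbdry : 0 ≤ m * (Ψ b m ^ 2 / 2 - Ψ (-b) m ^ 2 / 2) := by
      rcases le_total 0 m with h | h
      · rw [hin₂ m ⟨h, hm.2⟩]
        nlinarith [mul_nonneg h (sq_nonneg (Ψ b m))]
      · rw [hin₁ m ⟨hm.1, h⟩]
        nlinarith [mul_nonneg (neg_nonneg.2 h) (sq_nonneg (Ψ (-b) m))]
    exact key_1d (-b) b hbb (fun x => Ψ x m) (fun x => Ψx x m) sigmaT m σstar σsup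
      cf cfx hsigmaT (fun x hx => hderiv m hm x hx) hσstar hσ hbound hbdry
  have hC2 : (0:ℝ) ≤ C2 := by rw [hC2def]; positivity
  calc Real.sqrt (∫ μ in (-1:ℝ)..1, ∫ x in (-b)..b, ((Ψ x μ) ^ 2 + (μ * Ψx x μ) ^ 2))
      ≤ Real.sqrt (C2 * ∫ μ in (-1:ℝ)..1, ∫ x in (-b)..b,
          (μ * Ψx x μ + sigmaT x * Ψ x μ) ^ 2) := Real.sqrt_le_sqrt houter
    _ = _ := Real.sqrt_mul hC2 _
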